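/- If g(x) = x^2 + Ax + B ∈ ℤ[x] is irreducible over ℚ and B is squarefree with |B| ≥ 2, then f(x) = x^6 + A x^3 + B is irreducible over ℚ. -/

import Mathlib

open Polynomial IntermediateField

set_option maxHeartbeats 1000000
set_option synthInstance.maxHeartbeats 400000

theorem stmt3 (A B : ℤ)
    (hg : Irreducible (X ^ 2 + C (A : ℚ) * X + C (B : ℚ)))
    (hB : Squarefree B) (hB2 : 2 ≤ |B|) :
    Irreducible (X ^ 6 + C (A : ℚ) * X ^ 3 + C (B : ℚ)) := by
  set g : ℚ[X] := X ^ 2 + C (A : ℚ) * X + C (B : ℚ) with hgdef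
  have hgmonic : g.Monic := by unfold g; monicity!
  have hgne : g ≠ 0 := hgmonic.ne_zero
  have hgdeg : g.natDegree = 2 := by unfold g; compute_degree!
  have : Fact (Irreducible g) := ⟨hg⟩
  set K := AdjoinRoot g with hK
  set θ : K := AdjoinRoot.root g with hθdef
  have hθ0 : aeval θ g = 0 := by
    erw [AdjoinRoot.aeval_eq, AdjoinRoot.mk_self]
  have hθeq : θ ^ 2 + algebraMap ℚ K (A : ℚ) * θ + algebraMap ℚ K (B : ℚ) = 0 := by
    simpa [hgdef, map_add, map_mul, map_pow, aeval_X, aeval_C] using hθ0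
  -- θ is integral over ℤ
  have hθint : IsIntegral ℤ θ := by
    refine ⟨X ^ 2 + Polynomial.C A * X + Polynomial.C B, by monicity!, ?_⟩
    have : (algebraMap ℤ K) = (algebraMap ℚ K).comp (algebraMap ℤ ℚ) := by
      ext n; simp [IsScalarTower.algebraMap_apply ℤ ℚ K]
    simp only [eval₂_add, eval₂_mul, eval₂_pow, eval₂_X, eval₂_C, this, RingHom.comp_apply]
    simpa using hθeq
  -- norm of θ
  set pb := AdjoinRoot.powerBasis hgne with hpb
  have hminθ : minpoly ℚ θ = g := by
    erw [hθdef, AdjoinRoot.minpoly_root hgne, hgmonic.leadingCoeff]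
    simp
  have hNθ : Algebra.norm ℚ θ = (B : ℚ) := by
    have h1 : Algebra.norm ℚ pb.gen = (-1 : ℚ) ^ pb.dim * (minpoly ℚ pb.gen).coeff 0 :=
      Algebra.PowerBasis.norm_gen_eq_coeff_zero_minpoly pb
    have hgen : pb.gen = θ := rfl
    have hdim : pb.dim = 2 := by
      rw [hpb]; simp [AdjoinRoot.powerBasis, hgdeg]
    rw [hgen, hdim, hminθ] at h1
    rw [h1, hgdef]
    simp [coeff_add, coeff_C, coeff_X_pow]
  -- θ is not a cube in K
  have hcube : ∀ b : K, b ^ 3 ≠ θ := by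
    intro b hb
    have hbint : IsIntegral ℤ b := by
      refine IsIntegral.of_pow (n := 3) (by norm_num) ?_
      rw [hb]; exact hθint
    have hNb3 : (Algebra.norm ℚ b) ^ 3 = (B : ℚ) := by
      rw [← map_pow, hb, hNθ]
    have hNint : IsIntegral ℤ (Algebra.norm ℚ b) := Algebra.isIntegral_norm ℚ hbint
    obtain ⟨n, hn⟩ := IsIntegrallyClosed.isIntegral_iff.mp hNint
    have hn3 : n ^ 3 = B := by
      have : ((n : ℚ)) ^ 3 = (B : ℚ) := by
        rw [show ((n : ℚ)) = algebraMap ℤ ℚ n from rfl, hn, hNb3]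
      exact_mod_cast this
    have hdvd : n * n ∣ B := ⟨n, by rw [← hn3]; ring⟩
    have hu : IsUnit n := hB n hdvd
    have : |B| = 1 := by
      rcases Int.isUnit_iff.mp hu with h | h <;> rw [← hn3, h] <;> norm_num
    omega
  -- the Kummer extension
  have hirr3 : Irreducible (X ^ 3 - Polynomial.C θ : K[X]) :=
    X_pow_sub_C_irreducible_of_prime Nat.prime_three hcube
  have : Fact (Irreducible (X ^ 3 - Polynomial.C θ : K[X])) := ⟨hirr3⟩
  set q : K[X] := X ^ 3 - Polynomial.C θ with hq
  have hqne : q ≠ 0 := hirr3.ne_zero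
  set L := AdjoinRoot q with hL
  set α : L := AdjoinRoot.root q with hα
  have hα3 : α ^ 3 = algebraMap K L θ := by
    have h0 : aeval α q = 0 := by rw [AdjoinRoot.aeval_eq, AdjoinRoot.mk_self]
    have : α ^ 3 - algebraMap K L θ = 0 := by
      simpa [hq, map_sub, map_pow, aeval_X, aeval_C] using h0
    exact sub_eq_zero.mp this
  -- finite dimensionality and ranks
  haveI : FiniteDimensional ℚ K := PowerBasis.finite pb
  set pb2 := AdjoinRoot.powerBasis hqne with hpb2
  haveI : FiniteDimensional K L := PowerBasis.finite pb2
  haveI : FiniteDimensional ℚ L := FiniteDimensional.trans ℚ K L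
  have hrkK : Module.finrank ℚ K = 2 := by
    rw [PowerBasis.finrank pb]
    rw [hpb]; simp [AdjoinRoot.powerBasis, hgdeg]
  have hrkL : Module.finrank K L = 3 := by
    rw [PowerBasis.finrank pb2]
    rw [hpb2]; simp [AdjoinRoot.powerBasis, hq]
  have hrk6 : Module.finrank ℚ L = 6 := by
    have := Module.finrank_mul_finrank ℚ K L
    rw [hrkK, hrkL] at this
    omega
  -- α generates L over ℚ
  have hαint : IsIntegral ℚ α := IsIntegral.of_finite ℚ α
  set F : IntermediateField ℚ L := ℚ⟮α⟯ with hF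
  have hαF : α ∈ F := IntermediateField.mem_adjoin_simple_self ℚ α
  have hθ'F : algebraMap K L θ ∈ F := by
    rw [← hα3]; exact pow_mem hαF 3
  have hKF : ∀ k : K, algebraMap K L k ∈ F := by
    intro k
    have hmem : algebraMap K L k ∈
        (Algebra.adjoin ℚ {θ}).map (IsScalarTower.toAlgHom ℚ K L) :=
      ⟨k, by erw [hθdef, AdjoinRoot.adjoinRoot_eq_top]; trivial, rfl⟩
    rw [AlgHom.map_adjoin] at hmem
    have hle : Algebra.adjoin ℚ ((IsScalarTower.toAlgHom ℚ K L) '' {θ}) ≤ F.toSubalgebra := by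
      apply Algebra.adjoin_le
      rintro - ⟨y, hy, rfl⟩
      rcases hy with rfl
      simpa using hθ'F
    exact hle hmem
  have hall : ∀ x : L, x ∈ F := by
    intro x
    have hx : x ∈ Algebra.adjoin K {α} := by
      rw [hα, AdjoinRoot.adjoinRoot_eq_top]; trivial
    induction hx using Algebra.adjoin_induction with
    | mem y hy => rcases hy with rfl; exact hαF
    | algebraMap k => exact hKF k
    | add a b _ _ ha hb => exact add_mem ha hb
    | mul a b _ _ ha hb => exact mul_mem ha hb
  have htop : F = ⊤ := eq_top_iff.mpr fun x _ => hall x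
  -- minpoly of α has degree 6
  have hmindeg : (minpoly ℚ α).natDegree = 6 := by
    have h1 : Module.finrank ℚ F = (minpoly ℚ α).natDegree :=
      IntermediateField.adjoin.finrank hαint
    rw [htop, IntermediateField.finrank_top', hrk6] at h1
    omega
  -- f kills α
  set f : ℚ[X] := X ^ 6 + C (A : ℚ) * X ^ 3 + C (B : ℚ) with hf
  have hfmonic : f.Monic := by unfold f; monicity!
  have hfdeg : f.natDegree = 6 := by unfold f; compute_degree!
  have hfα : aeval α f = 0 := by
    have h6 : α ^ 6 = algebraMap K L θ ^ 2 := by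
      rw [← hα3]; ring
    have halg : ∀ r : ℚ, algebraMap ℚ L r = algebraMap K L (algebraMap ℚ K r) := fun r =>
      (IsScalarTower.algebraMap_apply ℚ K L r)
    rw [hf]
    simp only [map_add, map_mul, map_pow, aeval_X, aeval_C]
    rw [h6, hα3, halg, halg, ← map_mul, ← map_pow, ← map_add, ← map_add, hθeq, map_zero]
  -- conclude
  have hdvd : minpoly ℚ α ∣ f := minpoly.dvd ℚ α hfα
  have hmmonic : (minpoly ℚ α).Monic := minpoly.monic hαint
  obtain ⟨c, hc⟩ := hdvd
  have hcne : c ≠ 0 := by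
    rintro rfl
    rw [mul_zero] at hc
    exact hfmonic.ne_zero hc
  have hdegs : f.natDegree = (minpoly ℚ α).natDegree + c.natDegree := by
    rw [hc, Polynomial.natDegree_mul hmmonic.ne_zero hcne]
  have hcdeg : c.natDegree = 0 := by omega
  have hclead : c.leadingCoeff = 1 := by
    have := hfmonic
    rw [hc] at this
    have h2 := this.leadingCoeff
    rw [Polynomial.leadingCoeff_mul, hmmonic.leadingCoeff, one_mul] at h2
    exact h2
  have hc1 : c = 1 := by
    rw [Polynomial.eq_C_of_natDegree_eq_zero hcdeg]
    rw [Polynomial.eq_C_of_natDegree_eq_zero hcdeg] at hclead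
    simp only [Polynomial.leadingCoeff_C] at hclead
    rw [hclead]; simp
  have hfeq : f = minpoly ℚ α := by rw [hc, hc1, mul_one]
  rw [hfeq]
  exact minpoly.irreducible hαint
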